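/- arXiv:1604.04392 — 2 statements merged into one kernel-verified Lean document; each statement's English description precedes it below -/
import Mathlib

section
/- The map u ↦ u⁺ (pointwise positive part) is not bounded from H¹(0,1)* to H¹(0,1)*: the functions ψₙ(x) = cos(nπx) satisfy ‖ψₙ‖_{H¹*} → 0 as n → ∞, but ‖ψₙ⁺‖_{H¹*} does not converge to 0. -/
open Real MeasureTheory Filter

/-- The `H¹(0,1)*` norm of `f ∈ L²(0,1)`, realized as the supremum of the pairings
`∫₀¹ f v` over `v` in the unit ball of `H¹(0,1)` (taken in the dense subspace of
`C¹` functions). -/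
noncomputable def dualH1Norm (f : ℝ → ℝ) : ℝ :=
  sSup {y | ∃ v : ℝ → ℝ, ContDiff ℝ 1 v ∧
    (∫ x in (0:ℝ)..1, ((deriv v x)^2 + (v x)^2)) ≤ 1 ∧
    y = ∫ x in (0:ℝ)..1, f x * v x}

-- membership set
def Sset (f : ℝ → ℝ) : Set ℝ :=
  {y | ∃ v : ℝ → ℝ, ContDiff ℝ 1 v ∧
    (∫ x in (0:ℝ)..1, ((deriv v x)^2 + (v x)^2)) ≤ 1 ∧
    y = ∫ x in (0:ℝ)..1, f x * v x}

lemma zero_mem_Sset (f : ℝ → ℝ) : (0:ℝ) ∈ Sset f := by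
  refine ⟨fun _ => 0, contDiff_const, ?_, ?_⟩ <;> simp

lemma energy_parts {v : ℝ → ℝ} (hv : ContDiff ℝ 1 v)
    (h : (∫ x in (0:ℝ)..1, ((deriv v x)^2 + (v x)^2)) ≤ 1) :
    (∫ x in (0:ℝ)..1, (v x)^2) ≤ 1 ∧ (∫ x in (0:ℝ)..1, (deriv v x)^2) ≤ 1 := by
  have cv : Continuous v := hv.continuous
  have cd : Continuous (deriv v) := hv.continuous_deriv le_rfl
  have i1 : IntervalIntegrable (fun x => (deriv v x)^2) volume 0 1 :=
    ((cd.pow 2)).intervalIntegrable 0 1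
  have i2 : IntervalIntegrable (fun x => (v x)^2) volume 0 1 :=
    ((cv.pow 2)).intervalIntegrable 0 1
  have hsum : (∫ x in (0:ℝ)..1, ((deriv v x)^2 + (v x)^2))
      = (∫ x in (0:ℝ)..1, (deriv v x)^2) + ∫ x in (0:ℝ)..1, (v x)^2 :=
    intervalIntegral.integral_add i1 i2
  have n1 : 0 ≤ ∫ x in (0:ℝ)..1, (deriv v x)^2 :=
    intervalIntegral.integral_nonneg (by norm_num) (fun x _ => sq_nonneg _)
  have n2 : 0 ≤ ∫ x in (0:ℝ)..1, (v x)^2 :=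
    intervalIntegral.integral_nonneg (by norm_num) (fun x _ => sq_nonneg _)
  constructor <;> linarith [hsum ▸ h]

lemma Sset_bddAbove {f : ℝ → ℝ} (hf : Continuous f) (hb : ∀ x, |f x| ≤ 1) :
    ∀ y ∈ Sset f, y ≤ 1 := by
  rintro y ⟨v, hv, hE, rfl⟩
  have cv : Continuous v := hv.continuous
  have hv2 := (energy_parts hv hE).1
  have i1 : IntervalIntegrable (fun x => f x * v x) volume 0 1 :=
    (hf.mul cv).intervalIntegrable 0 1
  have i2 : IntervalIntegrable (fun x => ((v x)^2 + 1)/2) volume 0 1 :=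
    (((cv.pow 2).add continuous_const).div_const 2).intervalIntegrable 0 1
  have hmono : (∫ x in (0:ℝ)..1, f x * v x) ≤ ∫ x in (0:ℝ)..1, ((v x)^2 + 1)/2 := by
    apply intervalIntegral.integral_mono_on (by norm_num) i1 i2
    intro x _
    have h1 : f x * v x ≤ |v x| := by
      calc f x * v x ≤ |f x * v x| := le_abs_self _
        _ = |f x| * |v x| := abs_mul _ _
        _ ≤ 1 * |v x| := by gcongr; exact hb x
        _ = |v x| := one_mul _
    nlinarith [sq_nonneg (|v x| - 1), sq_abs (v x)]
  have hval : (∫ x in (0:ℝ)..1, ((v x)^2 + 1)/2)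
      = ((∫ x in (0:ℝ)..1, (v x)^2) + 1)/2 := by
    rw [intervalIntegral.integral_div, intervalIntegral.integral_add (f := fun x => (v x)^2)
      ((cv.pow 2).intervalIntegrable 0 1) (intervalIntegrable_const)]
    simp
  rw [hval] at hmono
  linarith

lemma pairing_bound {n : ℕ} (hn : 1 ≤ n) {v : ℝ → ℝ} (hv : ContDiff ℝ 1 v)
    (hE : (∫ x in (0:ℝ)..1, ((deriv v x)^2 + (v x)^2)) ≤ 1) :
    (∫ x in (0:ℝ)..1, Real.cos (n * π * x) * v x) ≤ ((n:ℝ) * π)⁻¹ := by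
  set c : ℝ := (n:ℝ) * π with hc
  have hcpos : 0 < c := by
    have : (1:ℝ) ≤ (n:ℝ) := by exact_mod_cast hn
    positivity
  have hcne : c ≠ 0 := ne_of_gt hcpos
  have cv : Continuous v := hv.continuous
  have cd : Continuous (deriv v) := hv.continuous_deriv le_rfl
  have hd2 := (energy_parts hv hE).2
  -- derivative of F x = sin (c x) / c is cos (c x)
  have hF : ∀ x : ℝ, HasDerivAt (fun y => Real.sin (c * y) / c) (Real.cos (c * x)) x := by
    intro x
    have h1 : HasDerivAt (fun y : ℝ => c * y) c x := by
      simpa using (hasDerivAt_id x).const_mul c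
    have h2 : HasDerivAt (fun y => Real.sin (c * y)) (Real.cos (c * x) * c) x :=
      (Real.hasDerivAt_sin (c * x)).comp x h1
    have h3 := h2.div_const c
    simpa [mul_div_assoc, hcne] using h3
  have hdv : ∀ x ∈ Set.uIcc (0:ℝ) 1, HasDerivAt v (deriv v x) x := fun x _ =>
    (hv.differentiable one_ne_zero x).hasDerivAt
  have ibp := intervalIntegral.integral_mul_deriv_eq_deriv_mul
    (u := v) (u' := deriv v) (v := fun y => Real.sin (c * y) / c)
    (v' := fun y => Real.cos (c * y))
    hdv (fun x _ => hF x)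
    (cd.intervalIntegrable 0 1)
    ((Real.continuous_cos.comp (continuous_const.mul continuous_id)).intervalIntegrable 0 1)
  -- sin (c * 1) = sin (n π) = 0
  have hsin1 : Real.sin (c * 1) = 0 := by
    rw [mul_one, hc]
    exact Real.sin_nat_mul_pi n
  have key : (∫ x in (0:ℝ)..1, Real.cos (c * x) * v x)
      = -(∫ x in (0:ℝ)..1, deriv v x * (Real.sin (c * x) / c)) := by
    have comm : (∫ x in (0:ℝ)..1, Real.cos (c * x) * v x)
        = ∫ x in (0:ℝ)..1, v x * Real.cos (c * x) := by
      apply intervalIntegral.integral_congr; intro x _; ring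
    rw [comm, ibp]
    have h0 : Real.sin c = 0 := by simpa using hsin1
    simp [h0]
  -- bound the right hand side
  have habs : |∫ x in (0:ℝ)..1, deriv v x * Real.sin (c * x)| ≤ 1 := by
    have h1 : |∫ x in (0:ℝ)..1, deriv v x * Real.sin (c * x)|
        ≤ ∫ x in (0:ℝ)..1, |deriv v x * Real.sin (c * x)| :=
      intervalIntegral.abs_integral_le_integral_abs (by norm_num)
    have i1 : IntervalIntegrable (fun x => |deriv v x * Real.sin (c * x)|) volume 0 1 :=
      ((cd.mul (Real.continuous_sin.comp (continuous_const.mul continuous_id))).abs).intervalIntegrable 0 1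
    have i2 : IntervalIntegrable (fun x => ((deriv v x)^2 + 1)/2) volume 0 1 :=
      (((cd.pow 2).add continuous_const).div_const 2).intervalIntegrable 0 1
    have h2 : (∫ x in (0:ℝ)..1, |deriv v x * Real.sin (c * x)|)
        ≤ ∫ x in (0:ℝ)..1, ((deriv v x)^2 + 1)/2 := by
      apply intervalIntegral.integral_mono_on (by norm_num) i1 i2
      intro x _
      have hs : |Real.sin (c * x)| ≤ 1 := Real.abs_sin_le_one _
      have : |deriv v x * Real.sin (c * x)| = |deriv v x| * |Real.sin (c * x)| := abs_mul _ _
      nlinarith [sq_nonneg (|deriv v x| - 1), sq_abs (deriv v x), abs_nonneg (deriv v x),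
        abs_nonneg (Real.sin (c * x))]
    have hval : (∫ x in (0:ℝ)..1, ((deriv v x)^2 + 1)/2)
        = ((∫ x in (0:ℝ)..1, (deriv v x)^2) + 1)/2 := by
      rw [intervalIntegral.integral_div, intervalIntegral.integral_add (f := fun x => (deriv v x)^2)
        ((cd.pow 2).intervalIntegrable 0 1) intervalIntegrable_const]
      simp
    rw [hval] at h2
    linarith
  have hdivform : (∫ x in (0:ℝ)..1, deriv v x * (Real.sin (c * x) / c))
      = (∫ x in (0:ℝ)..1, deriv v x * Real.sin (c * x)) / c := by
    rw [← intervalIntegral.integral_div]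
    apply intervalIntegral.integral_congr; intro x _; ring
  have : (∫ x in (0:ℝ)..1, Real.cos (c * x) * v x) ≤ c⁻¹ := by
    rw [key, hdivform]
    rw [neg_div' ]
    rw [div_le_iff₀ hcpos]
    have := (abs_le.mp habs).2
    have := (abs_le.mp habs).1
    rw [inv_mul_cancel₀ hcne]
    linarith
  simpa [hc, mul_assoc] using this

lemma posPart_integral_ge {n : ℕ} (hn : 1 ≤ n) :
    (1:ℝ)/4 ≤ ∫ x in (0:ℝ)..1, max (Real.cos ((n:ℝ) * π * x)) 0 := by
  set c : ℝ := (n:ℝ) * π with hc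
  have hcpos : 0 < c := by
    have : (1:ℝ) ≤ (n:ℝ) := by exact_mod_cast hn
    positivity
  have hcne : c ≠ 0 := ne_of_gt hcpos
  have ccos : Continuous (fun x : ℝ => Real.cos (c * x)) :=
    Real.continuous_cos.comp (continuous_const.mul continuous_id)
  -- ∫ cos (c x) over [0,1] = 0
  have hint_cos : (∫ x in (0:ℝ)..1, Real.cos (c * x)) = 0 := by
    rw [intervalIntegral.integral_comp_mul_left (f := Real.cos) hcne]
    rw [mul_zero, mul_one, integral_cos]
    rw [hc, Real.sin_nat_mul_pi]
    simp
  -- ∫ cos² (c x) over [0,1] = 1/2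
  have hint_cossq : (∫ x in (0:ℝ)..1, (Real.cos (c * x))^2) = 1/2 := by
    rw [intervalIntegral.integral_comp_mul_left (f := fun y => Real.cos y ^ 2) hcne]
    rw [mul_zero, mul_one, integral_cos_sq]
    have h1 : Real.sin c = 0 := by rw [hc]; exact Real.sin_nat_mul_pi n
    rw [h1]
    field_simp
    simp only [smul_eq_mul, mul_zero, Real.sin_zero, sub_zero, zero_add]
    field_simp
  -- |cos| ≥ cos², so ∫ |cos (c x)| ≥ 1/2
  have habs : (1:ℝ)/2 ≤ ∫ x in (0:ℝ)..1, |Real.cos (c * x)| := by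
    rw [← hint_cossq]
    apply intervalIntegral.integral_mono_on (by norm_num)
      ((ccos.pow 2).intervalIntegrable 0 1) (ccos.abs.intervalIntegrable 0 1)
    intro x _
    have h1 : |Real.cos (c * x)| ≤ 1 := Real.abs_cos_le_one _
    show Real.cos (c * x) ^ 2 ≤ |Real.cos (c * x)|
    nlinarith [sq_abs (Real.cos (c * x)), abs_nonneg (Real.cos (c * x))]
  -- max a 0 = (a + |a|)/2
  have hmax : ∀ a : ℝ, max a 0 = (a + |a|)/2 := by
    intro a
    rcases le_total a 0 with h | h
    · rw [max_eq_right h, abs_of_nonpos h]; ring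
    · rw [max_eq_left h, abs_of_nonneg h]; ring
  have hval : (∫ x in (0:ℝ)..1, max (Real.cos (c * x)) 0)
      = ((∫ x in (0:ℝ)..1, Real.cos (c * x)) + ∫ x in (0:ℝ)..1, |Real.cos (c * x)|)/2 := by
    rw [← intervalIntegral.integral_add (ccos.intervalIntegrable 0 1)
      (ccos.abs.intervalIntegrable 0 1), ← intervalIntegral.integral_div]
    apply intervalIntegral.integral_congr; intro x _; exact hmax _
  rw [hval, hint_cos]
  linarith

/-- The map `u ↦ u⁺` is not bounded from `H¹(0,1)*` to `H¹(0,1)*`: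
`‖ψₙ‖_{H¹*} → 0` for `ψₙ(x) = cos(nπx)`, but `‖ψₙ⁺‖_{H¹*}` does not tend to `0`. -/
theorem positive_part_stmt7 :
    Tendsto (fun n : ℕ => dualH1Norm (fun x => Real.cos (n * π * x))) atTop (nhds 0) ∧
    ¬ Tendsto (fun n : ℕ => dualH1Norm (fun x => max (Real.cos (n * π * x)) 0))
        atTop (nhds 0) := by
  have hdef : ∀ f : ℝ → ℝ, dualH1Norm f = sSup (Sset f) := fun f => rfl
  constructor
  · -- ‖ψₙ‖ → 0
    apply squeeze_zero' (g := fun n : ℕ => ((n:ℝ) * π)⁻¹)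
    · filter_upwards with n
      have hbdd : BddAbove (Sset (fun x => Real.cos (n * π * x))) :=
        ⟨1, fun y hy => Sset_bddAbove
          (Real.continuous_cos.comp (continuous_const.mul continuous_id))
          (fun x => Real.abs_cos_le_one _) y hy⟩
      rw [hdef]
      exact le_csSup hbdd (zero_mem_Sset _)
    · filter_upwards [eventually_ge_atTop 1] with n hn
      rw [hdef]
      apply csSup_le ⟨0, zero_mem_Sset _⟩
      rintro y ⟨v, hv, hE, rfl⟩
      exact pairing_bound hn hv hE
    · exact (Filter.Tendsto.atTop_mul_const Real.pi_pos
        tendsto_natCast_atTop_atTop).inv_tendsto_atTop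
  · -- ‖ψₙ⁺‖ does not tend to 0
    intro h
    have h4 := h.eventually (gt_mem_nhds (show (0:ℝ) < 1/4 by norm_num))
    obtain ⟨n, hlt, hn⟩ := (h4.and (eventually_ge_atTop 1)).exists
    have ccos : Continuous (fun x : ℝ => max (Real.cos ((n:ℝ) * π * x)) 0) :=
      (Real.continuous_cos.comp (continuous_const.mul continuous_id)).max continuous_const
    have hbdd : BddAbove (Sset (fun x => max (Real.cos ((n:ℝ) * π * x)) 0)) :=
      ⟨1, fun y hy => Sset_bddAbove ccos (fun x => by
        have h1 := Real.abs_cos_le_one ((n:ℝ) * π * x)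
        rw [abs_le] at h1 ⊢
        constructor
        · linarith [le_max_right (Real.cos ((n:ℝ) * π * x)) 0]
        · exact max_le h1.2 (by norm_num)) y hy⟩
    have hmem : (∫ x in (0:ℝ)..1, max (Real.cos ((n:ℝ) * π * x)) 0 * 1)
        ∈ Sset (fun x => max (Real.cos ((n:ℝ) * π * x)) 0) := by
      refine ⟨fun _ => 1, contDiff_const, ?_, rfl⟩
      norm_num [deriv_const']
    have hge : (1:ℝ)/4 ≤ dualH1Norm (fun x => max (Real.cos ((n:ℝ) * π * x)) 0) := by
      rw [hdef]
      refine le_trans ?_ (le_csSup hbdd hmem)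
      have : (∫ x in (0:ℝ)..1, max (Real.cos ((n:ℝ) * π * x)) 0 * 1)
          = ∫ x in (0:ℝ)..1, max (Real.cos ((n:ℝ) * π * x)) 0 := by
        simp
      rw [this]
      exact posPart_integral_ge hn
    exact absurd hlt (not_lt.mpr hge)
end

section
/- For all n ≥ 1, the L² pairing of ψₙ⁺ = max(cos(nπx),0) with vₑ(x) = min(4x, 1, 4(1−x)) satisfies ∫₀¹ ψₙ⁺(x) vₑ(x) dx ≥ 1/π − 1/√12 > 0. -/
open Real MeasureTheory intervalIntegral

lemma cosPos_cont : Continuous (fun u : ℝ => max (Real.cos u) 0) :=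
  Real.continuous_cos.max continuous_const

lemma int_cosPos_0_pi : ∫ u in (0:ℝ)..π, max (Real.cos u) 0 = 1 := by
  have hsplit := intervalIntegral.integral_add_adjacent_intervals
    (a := (0:ℝ)) (b := π/2) (c := π)
    (cosPos_cont.intervalIntegrable (μ := volume) _ _) (cosPos_cont.intervalIntegrable (μ := volume) _ _)
  have h1 : ∫ u in (0:ℝ)..(π/2), max (Real.cos u) 0 = 1 := by
    rw [intervalIntegral.integral_congr (g := Real.cos) ?_]
    · simp [integral_cos]
    · intro x hx
      rw [Set.uIcc_of_le (by positivity)] at hx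
      exact max_eq_left (Real.cos_nonneg_of_mem_Icc
        ⟨by linarith [hx.1, pi_pos], hx.2⟩)
  have h2 : ∫ u in (π/2)..π, max (Real.cos u) 0 = 0 := by
    rw [intervalIntegral.integral_congr (g := fun _ => (0:ℝ)) ?_]
    · simp
    · intro x hx
      rw [Set.uIcc_of_le (by linarith [pi_pos])] at hx
      exact max_eq_right (Real.cos_nonpos_of_pi_div_two_le_of_le hx.1
        (by linarith [hx.2, pi_pos]))
  linarith [hsplit]

lemma int_cosNeg_0_pi : ∫ u in (0:ℝ)..π, max (-Real.cos u) 0 = 1 := by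
  have hc : Continuous (fun u : ℝ => max (-Real.cos u) 0) :=
    Real.continuous_cos.neg.max continuous_const
  have hsplit := intervalIntegral.integral_add_adjacent_intervals
    (a := (0:ℝ)) (b := π/2) (c := π)
    (hc.intervalIntegrable (μ := volume) _ _) (hc.intervalIntegrable (μ := volume) _ _)
  have h1 : ∫ u in (0:ℝ)..(π/2), max (-Real.cos u) 0 = 0 := by
    rw [intervalIntegral.integral_congr (g := fun _ => (0:ℝ)) ?_]
    · simp
    · intro x hx
      rw [Set.uIcc_of_le (by positivity)] at hx
      refine max_eq_right (neg_nonpos.mpr (Real.cos_nonneg_of_mem_Icc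
        ⟨by linarith [hx.1, pi_pos], hx.2⟩))
  have h2 : ∫ u in (π/2)..π, max (-Real.cos u) 0 = 1 := by
    rw [intervalIntegral.integral_congr (g := fun u => -Real.cos u) ?_]
    · simp [integral_cos]
    · intro x hx
      rw [Set.uIcc_of_le (by linarith [pi_pos])] at hx
      exact max_eq_left (neg_nonneg.mpr (Real.cos_nonpos_of_pi_div_two_le_of_le hx.1
        (by linarith [hx.2, pi_pos])))
  linarith [hsplit]

lemma piece (k : ℕ) :
    ∫ u in ((k:ℝ)*π)..(((k:ℝ)+1)*π), max (Real.cos u) 0 = 1 := by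
  have h1 : ∫ u in (0:ℝ)..π, max (Real.cos (u + (k:ℝ)*π)) 0
      = ∫ u in ((k:ℝ)*π)..(((k:ℝ)+1)*π), max (Real.cos u) 0 := by
    rw [intervalIntegral.integral_comp_add_right (fun u => max (Real.cos u) 0) ((k:ℝ)*π)]
    norm_num [add_mul, add_comm]
  rw [← h1]
  have hcos : ∀ u : ℝ, Real.cos (u + (k:ℝ)*π) = (-1)^k * Real.cos u := fun u =>
    Real.cos_add_nat_mul_pi u k
  rcases Nat.even_or_odd k with hk | hk
  · simp_rw [hcos, hk.neg_one_pow, one_mul]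
    exact int_cosPos_0_pi
  · simp_rw [hcos, hk.neg_one_pow, neg_one_mul]
    exact int_cosNeg_0_pi

lemma int0 (m : ℕ) : ∫ u in (0:ℝ)..((m:ℝ)*π), max (Real.cos u) 0 = m := by
  induction m with
  | zero => simp
  | succ m ih =>
    have := intervalIntegral.integral_add_adjacent_intervals
      (a := (0:ℝ)) (b := (m:ℝ)*π) (c := ((m:ℝ)+1)*π)
      (cosPos_cont.intervalIntegrable (μ := volume) _ _) (cosPos_cont.intervalIntegrable (μ := volume) _ _)
    push_cast
    rw [← this, ih, piece m]

lemma intA (n : ℕ) (hn : 1 ≤ n) :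
    ∫ x in (0:ℝ)..1, max (Real.cos ((n:ℝ) * π * x)) 0 = 1/π := by
  have hc : ((n:ℝ) * π) ≠ 0 := by
    have := pi_pos
    positivity
  rw [intervalIntegral.integral_comp_mul_left (fun u => max (Real.cos u) 0) hc]
  rw [mul_zero, mul_one, int0 n]
  simp only [smul_eq_mul]
  field_simp

lemma intB (n : ℕ) (hn : 1 ≤ n) :
    ∫ x in (0:ℝ)..1, Real.cos ((n:ℝ) * π * x) ^ 2 = 1/2 := by
  have hc : ((n:ℝ) * π) ≠ 0 := by
    have := pi_pos
    positivity
  rw [intervalIntegral.integral_comp_mul_left (fun u => Real.cos u ^ 2) hc]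
  rw [mul_zero, mul_one, integral_cos_sq, Real.sin_nat_mul_pi]
  have hπ := pi_pos
  simp only [smul_eq_mul, mul_zero, Real.sin_zero, sub_zero, zero_add]
  field_simp

lemma poly_int (a b c : ℝ) :
    ∫ x in a..b, (4*x + c)^2 = ((4*b+c)^3 - (4*a+c)^3) / 12 := by
  have h : ∀ x ∈ Set.uIcc a b,
      HasDerivAt (fun x : ℝ => (4*x+c)^3/12) ((4*x+c)^2) x := by
    intro x _
    have h1 : HasDerivAt (fun x : ℝ => 4*x+c) 4 x := by
      simpa using ((hasDerivAt_id x).const_mul 4).add_const c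
    have h2 := (h1.pow 3).div_const 12
    simp only [Pi.pow_apply] at h2
    exact h2.congr_deriv (by ring)
  rw [intervalIntegral.integral_eq_sub_of_hasDerivAt h
    ((continuous_const.mul continuous_id |>.add continuous_const).pow 2
      |>.intervalIntegrable _ _)]
  ring

noncomputable def ve (x : ℝ) : ℝ := min (min (4*x) 1) (4*(1-x))

lemma ve_cont : Continuous ve := by
  unfold ve; fun_prop

lemma intC : ∫ x in (0:ℝ)..1, (ve x - 1)^2 = 1/6 := by
  have hci : ∀ a b : ℝ, IntervalIntegrable (fun x => (ve x - 1)^2) volume a b :=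
    fun a b => ((ve_cont.sub continuous_const).pow 2).intervalIntegrable _ _
  have s1 := intervalIntegral.integral_add_adjacent_intervals
    (a := (0:ℝ)) (b := 1/4) (c := 1) (hci _ _) (hci _ _)
  have s2 := intervalIntegral.integral_add_adjacent_intervals
    (a := (1/4:ℝ)) (b := 3/4) (c := 1) (hci _ _) (hci _ _)
  have h1 : ∫ x in (0:ℝ)..(1/4), (ve x - 1)^2 = 1/12 := by
    rw [intervalIntegral.integral_congr (g := fun x => (4*x + (-1))^2) ?_]
    · rw [poly_int]; norm_num
    · intro x hx
      rw [Set.uIcc_of_le (by norm_num)] at hx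
      obtain ⟨hx0, hx1⟩ := hx
      dsimp only
      unfold ve
      rw [show min (4*x) (1:ℝ) = 4*x from min_eq_left (by linarith),
        show min (4*x) (4*(1-x)) = 4*x from min_eq_left (by linarith)]
      ring
  have h2 : ∫ x in (1/4:ℝ)..(3/4), (ve x - 1)^2 = 0 := by
    rw [intervalIntegral.integral_congr (g := fun _ => (0:ℝ)) ?_]
    · simp
    · intro x hx
      rw [Set.uIcc_of_le (by norm_num)] at hx
      obtain ⟨hx0, hx1⟩ := hx
      dsimp only
      unfold ve
      rw [show min (4*x) (1:ℝ) = 1 from min_eq_right (by linarith),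
        show min (1:ℝ) (4*(1-x)) = 1 from min_eq_left (by linarith)]
      ring
  have h3 : ∫ x in (3/4:ℝ)..1, (ve x - 1)^2 = 1/12 := by
    rw [intervalIntegral.integral_congr (g := fun x => (4*x + (-3))^2) ?_]
    · rw [poly_int]; norm_num
    · intro x hx
      rw [Set.uIcc_of_le (by norm_num)] at hx
      obtain ⟨hx0, hx1⟩ := hx
      dsimp only
      unfold ve
      rw [show min (4*x) (1:ℝ) = 1 from min_eq_right (by linarith),
        show min (1:ℝ) (4*(1-x)) = 4*(1-x) from min_eq_right (by linarith)]
      ring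
  linarith [s1, s2]

lemma ptwise (ψ c v s : ℝ) (hψ0 : 0 ≤ ψ) (hψc : ψ^2 ≤ c^2) (hs : s^2 = 3)
    (hs0 : 0 < s) : ψ - s/6*c^2 - s/2*(v-1)^2 ≤ ψ * v := by
  nlinarith [mul_nonneg hs0.le (sq_nonneg (ψ - s*(1-v))),
    mul_le_mul_of_nonneg_left hψc hs0.le, sq_nonneg (1-v), hs]

/-- For all `n ≥ 1`, the `L²` pairing of `ψₙ⁺ = max(cos(nπx),0)` with
`vₑ(x) = min(4x, 1, 4(1−x))` satisfies `∫₀¹ ψₙ⁺ vₑ ≥ 1/π − 1/√12 > 0`. -/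
theorem positive_part_stmt10 (n : ℕ) (hn : 1 ≤ n) :
    (1/π - 1/Real.sqrt 12
      ≤ ∫ x in (0:ℝ)..1, max (Real.cos (n * π * x)) 0 * min (min (4*x) 1) (4*(1-x))) ∧
    0 < 1/π - 1/Real.sqrt 12 := by
  set s := Real.sqrt 3 with hsdef
  have hs : s^2 = 3 := Real.sq_sqrt (by norm_num)
  have hs0 : 0 < s := Real.sqrt_pos.mpr (by norm_num)
  have h12 : Real.sqrt 12 = 2*s := by
    rw [show (12:ℝ) = 4*3 by norm_num, Real.sqrt_mul (by norm_num), hsdef,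
      show (4:ℝ) = 2^2 by norm_num, Real.sqrt_sq (by norm_num)]
  have hinv : 1/Real.sqrt 12 = s/6 := by
    rw [h12]
    rw [div_eq_div_iff (by positivity) (by norm_num)]
    nlinarith [hs]
  have hslt : s < 1.7322 := by nlinarith [hs, hs0, sq_nonneg (s - 1.7322)]
  constructor
  · have key : (∫ x in (0:ℝ)..1, max (Real.cos ((n:ℝ) * π * x)) 0 * min (min (4*x) 1) (4*(1-x)))
        = ∫ x in (0:ℝ)..1, max (Real.cos ((n:ℝ) * π * x)) 0 * ve x := rfl
    rw [key, hinv]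
    have hcont1 : Continuous (fun x : ℝ => max (Real.cos ((n:ℝ) * π * x)) 0) :=
      cosPos_cont.comp (by fun_prop)
    have hcont2 : Continuous (fun x : ℝ => Real.cos ((n:ℝ) * π * x) ^ 2) := by fun_prop
    have hcont3 : Continuous (fun x : ℝ => (ve x - 1)^2) :=
      (ve_cont.sub continuous_const).pow 2
    have hmono : (∫ x in (0:ℝ)..1,
          (max (Real.cos ((n:ℝ) * π * x)) 0 - s/6 * Real.cos ((n:ℝ) * π * x) ^ 2
            - s/2 * (ve x - 1)^2))
        ≤ ∫ x in (0:ℝ)..1, max (Real.cos ((n:ℝ) * π * x)) 0 * ve x := by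
      apply intervalIntegral.integral_mono_on (by norm_num)
      · exact ((hcont1.sub (continuous_const.mul hcont2)).sub
          (continuous_const.mul hcont3)).intervalIntegrable _ _
      · exact (hcont1.mul ve_cont).intervalIntegrable _ _
      · intro x _
        apply ptwise _ _ _ _ (le_max_right _ _) _ hs hs0
        rcases le_total (Real.cos ((n:ℝ) * π * x)) 0 with h | h
        · rw [max_eq_right h]; nlinarith [sq_nonneg (Real.cos ((n:ℝ) * π * x))]
        · rw [max_eq_left h]
    refine le_trans (le_of_eq ?_) hmono
    rw [intervalIntegral.integral_sub
        (f := fun x => max (Real.cos ((n:ℝ) * π * x)) 0 - s/6 * Real.cos ((n:ℝ) * π * x) ^ 2)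
        (g := fun x => s/2 * (ve x - 1)^2)
        ((hcont1.sub (continuous_const.mul hcont2)).intervalIntegrable _ _)
        ((continuous_const.mul hcont3).intervalIntegrable _ _),
      intervalIntegral.integral_sub (g := fun x => s/6 * Real.cos ((n:ℝ) * π * x) ^ 2)
        (hcont1.intervalIntegrable _ _)
        ((continuous_const.mul hcont2).intervalIntegrable _ _),
      intervalIntegral.integral_const_mul, intervalIntegral.integral_const_mul,
      intA n hn, intB n hn, intC]
    ring
  · rw [hinv, sub_pos, div_lt_div_iff₀ (by norm_num : (0:ℝ) < 6) pi_pos]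
    nlinarith [pi_lt_d2, pi_pos]
end
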